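/- Let X be a tree and g a graph automorphism of X that fixes no vertex and does not exchange two adjacent vertices. Let λ(g) = min over vertices v of d(v, g·v), and let A_g = {v : d(v, g·v) = λ(g)}. Then for every vertex x of X and every integer n ≥ 1, one has d(x, gⁿ·x) = n·λ(g) + 2·d(x, A_g), where d(x, A_g) denotes the minimal distance from x to a vertex of A_g. -/

import Mathlib

open SimpleGraph

/-- The translation length of a self-map `f` of the vertex set of a graph `G`:
`λ(f) = min over vertices v of d(v, f v)`. -/
noncomputable def translationLength {V : Type*} (G : SimpleGraph V) (f : V → V) : ℕ :=
  ⨅ v : V, G.dist v (f v)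

/-- The graph distance from a vertex `x` to a set `A` of vertices. -/
noncomputable def distToSet {V : Type*} (G : SimpleGraph V) (x : V) (A : Set V) : ℕ :=
  sInf ((fun a => G.dist x a) '' A)

open Walk

namespace TreeAux

variable {V : Type*} {G : SimpleGraph V}

def pen {u v : V} (p : G.Walk u v) : V := p.getVert (p.length - 1)

lemma pen_append {u v w : V} (p : G.Walk u v) (q : G.Walk v w) (hq : ¬ q.Nil) :
    pen (p.append q) = pen q := by
  have hq1 : 1 ≤ q.length := by rwa [Walk.not_nil_iff_lt_length] at hq
  simp only [pen, Walk.length_append, Walk.getVert_append]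
  rw [if_neg (by omega)]
  congr 1
  omega

lemma getVert_one_append {u v w : V} (p : G.Walk u v) (q : G.Walk v w) (hp : ¬ p.Nil) :
    (p.append q).getVert 1 = p.getVert 1 := by
  have hp1 : 1 ≤ p.length := by rwa [Walk.not_nil_iff_lt_length] at hp
  rw [Walk.getVert_append]
  rcases Nat.lt_or_ge 1 p.length with h | h
  · rw [if_pos h]
  · have h1 : p.length = 1 := by omega
    rw [if_neg (by omega), h1]
    simp only [Nat.sub_self, Walk.getVert_zero]
    rw [← h1, Walk.getVert_length]

lemma pen_reverse {u v : V} (p : G.Walk u v) (hp : ¬ p.Nil) :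
    pen p.reverse = p.getVert 1 := by
  have hp1 : 1 ≤ p.length := by rwa [Walk.not_nil_iff_lt_length] at hp
  simp only [pen, Walk.length_reverse, Walk.getVert_reverse]
  congr 1
  omega

/-- unique path in a tree -/
lemma path_eq {u v : V} (hG : G.IsTree) {p q : G.Walk u v} (hp : p.IsPath) (hq : q.IsPath) :
    p = q := by
  have := hG.IsAcyclic.path_unique ⟨p, hp⟩ ⟨q, hq⟩
  exact congrArg Subtype.val this

lemma path_length {u v : V} (hG : G.IsTree) {p : G.Walk u v} (hp : p.IsPath) :
    p.length = G.dist u v := by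
  obtain ⟨q, hq, hql⟩ := hG.isConnected.exists_path_of_dist u v
  rw [path_eq hG hp hq, hql]

/-- the key appending lemma: in a tree, concatenation of two paths with no backtracking at
the junction is a path -/
lemma append_isPath (hG : G.IsTree) {u v w : V} {p : G.Walk u v} {q : G.Walk v w}
    (hp : p.IsPath) (hq : q.IsPath) (hpn : ¬ p.Nil) (hqn : ¬ q.Nil)
    (hne : pen p ≠ q.getVert 1) : (p.append q).IsPath := by
  classical
  apply Walk.IsPath.mk'
  rw [Walk.support_append]
  apply List.Nodup.append hp.support_nodup (hq.support_nodup.tail)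
  intro z hzp hzq
  have hzq' : z ∈ q.support := List.mem_of_mem_tail hzq
  have hzv : z ≠ v := by
    intro h
    subst h
    have := hq.support_nodup
    rw [Walk.support_eq_cons] at this
    exact (List.nodup_cons.mp this).1 hzq
  -- two distinct paths from z to v
  have ha : (p.dropUntil z hzp).IsPath := hp.dropUntil hzp
  have hb : ((q.takeUntil z hzq').reverse).IsPath := (hq.takeUntil hzq').reverse
  have heq : p.dropUntil z hzp = (q.takeUntil z hzq').reverse := path_eq hG ha hb
  have hdn : ¬ (p.dropUntil z hzp).Nil := Walk.not_nil_of_ne hzv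
  have htn : ¬ (q.takeUntil z hzq').Nil := Walk.not_nil_of_ne (Ne.symm hzv)
  apply hne
  calc pen p = pen ((p.takeUntil z hzp).append (p.dropUntil z hzp)) := by
        rw [Walk.take_spec]
    _ = pen (p.dropUntil z hzp) := pen_append _ _ hdn
    _ = pen ((q.takeUntil z hzq').reverse) := by rw [heq]
    _ = (q.takeUntil z hzq').getVert 1 := pen_reverse _ htn
    _ = ((q.takeUntil z hzq').append (q.dropUntil z hzq')).getVert 1 :=
        (getVert_one_append _ _ htn).symm
    _ = q.getVert 1 := by rw [Walk.take_spec]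

lemma dist_map (hG : G.Connected) (f : G ≃g G) (u v : V) :
    G.dist (f u) (f v) = G.dist u v := by
  have h1 : ∀ (f : G ≃g G) (u v : V), G.dist (f u) (f v) ≤ G.dist u v := by
    intro f u v
    obtain ⟨p, hp⟩ := (hG u v).exists_walk_length_eq_dist
    calc G.dist (f u) (f v) ≤ (p.map f.toHom).length := SimpleGraph.dist_le _
      _ = p.length := by simp
      _ = G.dist u v := hp
  refine le_antisymm (h1 f u v) ?_
  have := h1 f.symm (f u) (f v)
  simpa using this


lemma getVert_map (f : G →g G) {u v : V} (p : G.Walk u v) (i : ℕ) :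
    (p.map f).getVert i = f (p.getVert i) := by
  induction p generalizing i with
  | nil => simp [Walk.getVert]
  | cons h q ih =>
    cases i with
    | zero => simp
    | succ n => simpa [Walk.map_cons, Walk.getVert_cons_succ] using ih n

lemma getVert_inj {u v : V} {p : G.Walk u v} (hp : p.IsPath) :
    ∀ i j, i ≤ p.length → j ≤ p.length → p.getVert i = p.getVert j → i = j := by
  induction p with
  | nil => intro i j hi hj _; simp only [Walk.length_nil, Nat.le_zero] at hi hj; omega
  | cons h q ih =>
    rw [Walk.cons_isPath_iff] at hp
    intro i j hi hj hij
    simp only [Walk.length_cons] at hi hj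
    match i, j with
    | 0, 0 => rfl
    | 0, (j+1) =>
      exfalso
      apply hp.2
      rw [Walk.mem_support_iff_exists_getVert]
      exact ⟨j, by simpa [Walk.getVert_cons_succ] using hij.symm, by omega⟩
    | (i+1), 0 =>
      exfalso
      apply hp.2
      rw [Walk.mem_support_iff_exists_getVert]
      exact ⟨i, by simpa [Walk.getVert_cons_succ] using hij, by omega⟩
    | (i+1), (j+1) =>
      simp only [Walk.getVert_cons_succ] at hij
      have := ih hp.1 i j (by omega) (by omega) hij
      omega


lemma pen_copy {u v u' v' : V} (p : G.Walk u v) (hu : u = u') (hv : v = v') :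
    pen (p.copy hu hv) = pen p := by
  simp [pen, Walk.length_copy]

noncomputable def geo (hc : G.Connected) (u v : V) : G.Walk u v :=
  (hc.exists_path_of_dist u v).choose

lemma geo_isPath (hc : G.Connected) (u v : V) : (geo hc u v).IsPath :=
  (hc.exists_path_of_dist u v).choose_spec.1

lemma geo_length (hc : G.Connected) (u v : V) : (geo hc u v).length = G.dist u v :=
  (hc.exists_path_of_dist u v).choose_spec.2

lemma eq_geo {u v : V} (hG : G.IsTree) {p : G.Walk u v} (hp : p.IsPath) :
    p = geo hG.isConnected u v :=
  path_eq hG hp (geo_isPath _ _ _)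

lemma pow_apply_succ (g : G ≃g G) (n : ℕ) (x : V) : (g ^ (n+1)) x = (g ^ n) (g x) := by
  rw [pow_succ]; rfl

lemma pow_apply_succ' (g : G ≃g G) (n : ℕ) (x : V) : (g ^ (n+1)) x = g ((g ^ n) x) := by
  rw [pow_succ']; rfl

lemma pow_inj (g : G ≃g G) (n : ℕ) {a b : V} (h : (g ^ n) a = (g ^ n) b) : a = b := by
  induction n with
  | zero => simpa using h
  | succ m ih =>
    rw [pow_apply_succ', pow_apply_succ'] at h
    exact ih (g.injective h)

/-- axial case : if the geodesic from x to g x does not backtrack at g x, then for all n the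
n-fold concatenation is a geodesic -/
lemma axial (hG : G.IsTree) (g : G ≃g G) {x : V} (hx1 : G.dist x (g x) ≠ 0)
    (hB : pen (geo hG.isConnected x (g x)) ≠ g ((geo hG.isConnected x (g x)).getVert 1)) :
    ∀ n, 1 ≤ n → ∃ w : G.Walk x ((g ^ n) x), w.IsPath ∧ w.length = n * G.dist x (g x) ∧
      w.getVert 1 = (geo hG.isConnected x (g x)).getVert 1 ∧
      pen w = (g ^ (n-1)) (pen (geo hG.isConnected x (g x))) := by
  set p := geo hG.isConnected x (g x) with hpdef
  have hp : p.IsPath := geo_isPath _ _ _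
  have hplen : p.length = G.dist x (g x) := geo_length _ _ _
  have hppos : 0 < p.length := by omega
  intro n hn
  induction n, hn using Nat.le_induction with
  | base =>
    refine ⟨p.copy rfl (by rw [pow_one]), ?_, ?_, ?_, ?_⟩
    · rwa [Walk.isPath_copy]
    · simp [hplen]
    · simp
    · simp only [pen_copy]
      norm_num
  | succ n hn ih =>
    obtain ⟨w, hwp, hwl, hw1, hwpen⟩ := ih
    have hq2 : ((g ^ n : G ≃g G) : G →g G) (g x) = (g ^ (n+1)) x := (pow_apply_succ g n x).symm
    set q : G.Walk ((g ^ n) x) ((g ^ (n+1)) x) :=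
      (p.map ((g ^ n : G ≃g G) : G →g G)).copy rfl hq2 with hqdef
    have hqp : q.IsPath := by
      rw [hqdef, Walk.isPath_copy]
      exact Walk.map_isPath_of_injective (fun a b h => pow_inj g n h) hp
    have hwn : ¬ w.Nil := by
      rw [Walk.not_nil_iff_lt_length, hwl]
      have : 0 < G.dist x (g x) := by omega
      exact Nat.mul_pos (by omega) this
    have hqn : ¬ q.Nil := by
      rw [Walk.not_nil_iff_lt_length, hqdef]
      simpa using hppos
    have hqv1 : q.getVert 1 = (g ^ n) (p.getVert 1) := by
      rw [hqdef]
      rw [Walk.getVert_copy]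
      exact getVert_map _ p 1
    have hqpen : pen q = (g ^ n) (pen p) := by
      rw [hqdef, pen_copy]
      simp only [pen, Walk.length_map]
      exact getVert_map _ p (p.length - 1)
    have hne : pen w ≠ q.getVert 1 := by
      rw [hqv1, hwpen]
      intro h
      apply hB
      have hn1 : n - 1 + 1 = n := by omega
      rw [← hn1, pow_apply_succ] at h
      exact pow_inj g (n-1) h
    refine ⟨w.append q, append_isPath hG hwp hqp hwn hqn hne, ?_, ?_, ?_⟩
    · rw [Walk.length_append, hwl, hqdef, Walk.length_copy, Walk.length_map, hplen]
      ring
    · rw [getVert_one_append _ _ hwn, hw1]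
    · rw [pen_append _ _ hqn, hqpen]
      norm_num


lemma key (hG : G.IsTree) (g : G ≃g G)
    (hnofix : ∀ v : V, g v ≠ v)
    (hninv : ∀ u v : V, G.Adj u v → ¬(g u = v ∧ g v = u)) :
    ∀ (L : ℕ) (x : V), G.dist x (g x) = L →
    ∃ (c k : ℕ) (y : V),
      G.dist x (g x) = c + 2*k ∧ G.dist y (g y) = c ∧ G.dist x y ≤ k ∧
      ∀ n, 1 ≤ n → ∃ w : G.Walk x ((g ^ n) x), w.IsPath ∧ w.length = n*c + 2*k ∧
        w.getVert 1 = (geo hG.isConnected x (g x)).getVert 1 ∧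
        (pen w = (g ^ (n-1)) (pen (geo hG.isConnected x (g x))) ∨
         pen w = (g ^ n) ((geo hG.isConnected x (g x)).getVert 1)) := by
  intro L
  induction L using Nat.strong_induction_on with
  | _ L IH =>
    intro x hL
    set p := geo hG.isConnected x (g x) with hpdef
    have hp : p.IsPath := geo_isPath _ _ _
    have hplen' : p.length = G.dist x (g x) := geo_length _ _ _
    have hplen : p.length = L := by omega
    have hL0 : L ≠ 0 := by
      intro h
      subst h
      exact hnofix x ((hG.isConnected.dist_eq_zero_iff.mp hL).symm)
    have hinj := getVert_inj hp
    by_cases hB : pen p = g (p.getVert 1)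
    case neg =>
      refine ⟨L, 0, x, by omega, hL, by simp, ?_⟩
      intro n hn
      obtain ⟨w, hwp, hwl, hw1, hwpen⟩ := axial hG g (by omega) hB n hn
      exact ⟨w, hwp, by rw [hwl, hL]; omega, hw1, Or.inl hwpen⟩
    case pos =>
      have hgx : p.getVert L = g x := by rw [← hplen, Walk.getVert_length]
      have hL1 : L ≠ 1 := by
        intro h
        subst h
        have hadj : G.Adj x (g x) := SimpleGraph.dist_eq_one_iff_adj.mp hL
        apply hninv x (g x) hadj
        refine ⟨rfl, ?_⟩
        have h0 : pen p = x := by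
          rw [pen, hplen]
          exact p.getVert_zero
        have h1 : p.getVert 1 = g x := by rw [← hplen, Walk.getVert_length]
        rw [h0, h1] at hB
        exact hB.symm
      have hL2 : L ≠ 2 := by
        intro h
        subst h
        have h0 : pen p = p.getVert 1 := by rw [pen, hplen]
        rw [h0] at hB
        exact hnofix (p.getVert 1) hB.symm
      have hL3 : 3 ≤ L := by omega
      have hpnil : ¬ p.Nil := by rw [Walk.not_nil_iff_lt_length]; omega
      have hadj1 : G.Adj x (p.getVert 1) := p.adj_snd hpnil
      -- build the middle path from x' to g x'
      have htp : p.tail.IsPath := hp.tail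
      have htlen : p.tail.length = L - 1 := by
        have := Walk.length_tail_add_one hpnil
        omega
      have hrp : p.tail.reverse.IsPath := htp.reverse
      have hrlen : p.tail.reverse.length = L - 1 := by
        rw [Walk.length_reverse, htlen]
      have hrnil : ¬ p.tail.reverse.Nil := by rw [Walk.not_nil_iff_lt_length]; omega
      have hrget : ∀ j, j ≤ L - 1 → p.tail.reverse.getVert j = p.getVert (L - j) := by
        intro j hj
        rw [Walk.getVert_reverse, htlen, Walk.getVert_tail _]
        congr 1
        omega
      have hr1 : p.tail.reverse.getVert 1 = g (p.getVert 1) := by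
        rw [hrget 1 (by omega), ← hB, pen, hplen]
      set mid : G.Walk (p.getVert 1) (g (p.getVert 1)) :=
        ((p.tail.reverse.tail).copy (by exact hr1) rfl).reverse with hmiddef
      have hrtlen : p.tail.reverse.tail.length = L - 2 := by
        have := Walk.length_tail_add_one hrnil
        omega
      have hmidp : mid.IsPath := by
        rw [hmiddef]
        apply Walk.IsPath.reverse
        rw [Walk.isPath_copy]
        exact hrp.tail
      have hmidlen : mid.length = L - 2 := by
        rw [hmiddef, Walk.length_reverse, Walk.length_copy, hrtlen]
      have hmidget : ∀ i, i ≤ L - 2 → mid.getVert i = p.getVert (i+1) := by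
        intro i hi
        rw [hmiddef, Walk.getVert_reverse, Walk.length_copy, Walk.getVert_copy,
          hrtlen, Walk.getVert_tail _, hrget (L - 2 - i + 1) (by omega)]
        congr 1
        omega
      have hdist' : G.dist (p.getVert 1) (g (p.getVert 1)) = L - 2 := by
        rw [← path_length hG hmidp, hmidlen]
      have hgeo' : geo hG.isConnected (p.getVert 1) (g (p.getVert 1)) = mid :=
        (eq_geo hG hmidp).symm
      have hgeo'1 : (geo hG.isConnected (p.getVert 1) (g (p.getVert 1))).getVert 1
          = p.getVert 2 := by
        rw [hgeo', hmidget 1 (by omega)]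
      have hgeo'pen : pen (geo hG.isConnected (p.getVert 1) (g (p.getVert 1)))
          = p.getVert (L - 2) := by
        rw [hgeo', pen, hmidlen, hmidget (L - 2 - 1) (by omega)]
        congr 1
        omega
      obtain ⟨c, k, y, h1, h2, h3, hws⟩ := IH (L-2) (by omega) (p.getVert 1) hdist'
      have hcpos : 1 ≤ c := by
        rcases Nat.eq_zero_or_pos c with hc | hc
        · rw [hc] at h2
          exact absurd ((hG.isConnected.dist_eq_zero_iff.mp h2).symm) (hnofix y)
        · omega
      refine ⟨c, k+1, y, by omega, h2, ?_, ?_⟩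
      · calc G.dist x y ≤ G.dist x (p.getVert 1) + G.dist (p.getVert 1) y :=
              hG.isConnected.dist_triangle
          _ ≤ 1 + k := by
              have : G.dist x (p.getVert 1) = 1 := SimpleGraph.dist_eq_one_iff_adj.mpr hadj1
              omega
          _ ≤ k + 1 := by omega
      · intro n hn
        obtain ⟨w', hw'p, hw'l, hw'1, hw'pen⟩ := hws n hn
        have hadj2 : G.Adj ((g^n) (p.getVert 1)) ((g^n) x) :=
          (Iso.map_adj_iff (g^n)).mpr hadj1.symm
        have he2p : (Walk.cons hadj2 Walk.nil).IsPath := by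
          rw [Walk.cons_isPath_iff]
          exact ⟨Walk.IsPath.nil, by simpa using hadj2.ne⟩
        have he2n : ¬ (Walk.cons hadj2 Walk.nil).Nil := Walk.not_nil_cons
        have hw'n : ¬ w'.Nil := by
          rw [Walk.not_nil_iff_lt_length, hw'l]
          have : 1 ≤ n * c := Nat.mul_pos (by omega) (by omega)
          omega
        have hne2 : pen w' ≠ (Walk.cons hadj2 Walk.nil).getVert 1 := by
          have he2v : (Walk.cons hadj2 Walk.nil).getVert 1 = (g^n) x := rfl
          rw [he2v]
          rcases hw'pen with h | h
          · rw [h, hgeo'pen]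
            intro hcontra
            have hn1 : n - 1 + 1 = n := by omega
            have hgn : (g^n) x = (g^(n-1)) (g x) := by
              conv_lhs => rw [← hn1]
              rw [pow_apply_succ]
            rw [hgn] at hcontra
            have h5 := pow_inj g (n-1) hcontra
            have h6 : p.getVert (L-2) = p.getVert L := by rw [hgx]; exact h5
            have := hinj (L-2) L (by omega) (by omega) h6
            omega
          · rw [h, hgeo'1]
            intro hcontra
            have h5 := pow_inj g n hcontra
            have h6 : p.getVert 2 = p.getVert 0 := by rw [h5, p.getVert_zero]
            have := hinj 2 0 (by omega) (by omega) h6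
            omega
        have hinnerp := append_isPath hG hw'p he2p hw'n he2n hne2
        have hinnern : ¬ (w'.append (Walk.cons hadj2 Walk.nil)).Nil := by
          rw [Walk.not_nil_iff_lt_length, Walk.length_append]
          simp
        have he1p : (Walk.cons hadj1 Walk.nil).IsPath := by
          rw [Walk.cons_isPath_iff]
          exact ⟨Walk.IsPath.nil, by simpa using hadj1.ne⟩
        have he1n : ¬ (Walk.cons hadj1 Walk.nil).Nil := Walk.not_nil_cons
        have hne1 : pen (Walk.cons hadj1 Walk.nil)
            ≠ (w'.append (Walk.cons hadj2 Walk.nil)).getVert 1 := by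
          have hv1 : pen (Walk.cons hadj1 Walk.nil) = x := rfl
          rw [hv1, getVert_one_append _ _ hw'n, hw'1, hgeo'1]
          intro hcontra
          have h6 : p.getVert 0 = p.getVert 2 := by rw [p.getVert_zero]; exact hcontra
          have := hinj 0 2 (by omega) (by omega) h6
          omega
        refine ⟨(Walk.cons hadj1 Walk.nil).append (w'.append (Walk.cons hadj2 Walk.nil)),
          append_isPath hG he1p hinnerp he1n hinnern hne1, ?_, ?_, ?_⟩
        · rw [Walk.length_append, Walk.length_append, hw'l]
          simp only [Walk.length_cons, Walk.length_nil]
          ring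
        · rw [getVert_one_append _ _ he1n]
          rfl
        · right
          rw [pen_append _ _ hinnern, pen_append _ _ he2n]
          rfl

end TreeAux

open TreeAux in
/-- Identity (3.3) of the paper, extended to powers: if `g` is a hyperbolic automorphism
of a tree (no fixed vertex, no inversion), with translation length `λ(g)` and axis
`A_g = {v : d(v, g·v) = λ(g)}`, then `d(x, gⁿ·x) = n·λ(g) + 2·d(x, A_g)` for every
vertex `x` and every `n ≥ 1`. -/
theorem stmt_10 {V : Type*} (G : SimpleGraph V) (hG : G.IsTree)
    (g : G ≃g G)
    (hnofix : ∀ v : V, g v ≠ v)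
    (hninv : ∀ u v : V, G.Adj u v → ¬(g u = v ∧ g v = u)) :
    ∀ x : V, ∀ n : ℕ, 1 ≤ n →
      G.dist x ((g ^ n) x) =
        n * translationLength G g +
          2 * distToSet G x {v : V | G.dist v (g v) = translationLength G g} := by
  intro x n hn
  haveI : Nonempty V := ⟨x⟩
  obtain ⟨c, k, y, h1, h2, h3, hws⟩ := key hG g hnofix hninv (G.dist x (g x)) x rfl
  obtain ⟨w, hwp, hwl, -, -⟩ := hws n hn
  have hdxn : G.dist x ((g ^ n) x) = n * c + 2 * k := by
    rw [← path_length hG hwp, hwl]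
  have hmin : ∀ v : V, c ≤ G.dist v (g v) := by
    intro v
    obtain ⟨c', k', y', h1', h2', h3', hws'⟩ :=
      key hG g hnofix hninv (G.dist v (g v)) v rfl
    have hle : c ≤ c' := by
      by_contra hlt
      push_neg at hlt
      set N := 2 * G.dist x v + 2 * k' + 1 with hN
      obtain ⟨w1, hw1p, hw1l, -, -⟩ := hws N (by omega)
      obtain ⟨w2, hw2p, hw2l, -, -⟩ := hws' N (by omega)
      have d1 : G.dist x ((g ^ N) x) = N * c + 2 * k := by
        rw [← path_length hG hw1p, hw1l]
      have d2 : G.dist v ((g ^ N) v) = N * c' + 2 * k' := by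
        rw [← path_length hG hw2p, hw2l]
      have tri1 : G.dist x ((g ^ N) x)
          ≤ G.dist x ((g ^ N) v) + G.dist ((g ^ N) v) ((g ^ N) x) :=
        hG.isConnected.dist_triangle
      have tri2 : G.dist x ((g ^ N) v) ≤ G.dist x v + G.dist v ((g ^ N) v) :=
        hG.isConnected.dist_triangle
      have hmap : G.dist ((g ^ N) v) ((g ^ N) x) = G.dist v x :=
        dist_map hG.isConnected (g ^ N) v x
      have hcomm : G.dist v x = G.dist x v := SimpleGraph.dist_comm
      have hmul : N * (c' + 1) ≤ N * c := Nat.mul_le_mul_left N (by omega)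
      rw [d1] at tri1
      rw [d2] at tri2
      rw [hmap, hcomm] at tri1
      have hmul' : N * (c' + 1) = N * c' + N := by ring
      omega
    omega
  have htl : translationLength G g = c := by
    apply le_antisymm
    · calc translationLength G g ≤ G.dist y (g y) := ciInf_le (OrderBot.bddBelow _) y
        _ = c := h2
    · exact le_ciInf hmin
  have hset : distToSet G x {v : V | G.dist v (g v) = translationLength G g} = k := by
    have hyA : y ∈ {v : V | G.dist v (g v) = translationLength G g} := by
      simp only [Set.mem_setOf_eq, htl, h2]
    rw [distToSet]
    apply le_antisymm
    · calc sInf ((fun a => G.dist x a) '' {v : V | G.dist v (g v) = translationLength G g})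
          ≤ G.dist x y := Nat.sInf_le ⟨y, hyA, rfl⟩
        _ ≤ k := h3
    · have hne : ((fun a => G.dist x a) '' {v : V | G.dist v (g v) = translationLength G g}).Nonempty :=
        ⟨G.dist x y, ⟨y, hyA, rfl⟩⟩
      apply le_csInf hne
      rintro b ⟨v, hv, rfl⟩
      simp only [Set.mem_setOf_eq, htl] at hv
      show k ≤ G.dist x v
      have tri1 : G.dist x (g x) ≤ G.dist x (g v) + G.dist (g v) (g x) :=
        hG.isConnected.dist_triangle
      have tri2 : G.dist x (g v) ≤ G.dist x v + G.dist v (g v) :=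
        hG.isConnected.dist_triangle
      have hmap : G.dist (g v) (g x) = G.dist v x := dist_map hG.isConnected g v x
      have hcomm : G.dist v x = G.dist x v := SimpleGraph.dist_comm
      omega
  rw [hdxn, hset, htl]
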